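/- Let D = (0,L)×(0,B) and u ∈ H²(D) ∩ H^1_0(D). Then sup_D u² ≤ ‖u_{xy}‖²_{L²(D)} + ‖∇u‖²_{L²(D)} + ‖u‖²_{L²(D)}. -/

import Mathlib

open MeasureTheory Set

/-- Pointwise bound on the rectangle `D = (0,L)×(0,B)`:
for `u ∈ H²(D) ∩ H¹₀(D)`, `sup_D u² ≤ ‖u_{xy}‖² + ‖∇u‖² + ‖u‖²`. -/
theorem sup_bound_by_mixed_derivative (L B : ℝ) (hL : 0 < L) (hB : 0 < B)
    (u : ℝ → ℝ → ℝ) (hu : ContDiff ℝ 2 (Function.uncurry u))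
    (hbx : ∀ y, u 0 y = 0 ∧ u L y = 0)
    (hby : ∀ x, u x 0 = 0 ∧ u x B = 0) :
    ∀ x ∈ Ioo 0 L, ∀ y ∈ Ioo 0 B,
      (u x y) ^ 2 ≤
        (∫ p in Ioo 0 L ×ˢ Ioo 0 B,
            (deriv (fun t => deriv (fun s => u s t) p.1) p.2) ^ 2)
          + (∫ p in Ioo 0 L ×ˢ Ioo 0 B,
              ((deriv (fun s => u s p.2) p.1) ^ 2 + (deriv (u p.1) p.2) ^ 2))
          + (∫ p in Ioo 0 L ×ˢ Ioo 0 B, (u p.1 p.2) ^ 2) := by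
  intro x hx y hy
  set f : ℝ × ℝ → ℝ := Function.uncurry u with hf_def
  have hf1 : ContDiff ℝ 1 f := hu.of_le one_le_two
  have hfd : ContDiff ℝ 1 (fderiv ℝ f) := hu.fderiv_right (by norm_num)
  set A : ℝ × ℝ → ℝ := fun p => fderiv ℝ f p (1, 0) with hA_def
  set Bf : ℝ × ℝ → ℝ := fun p => fderiv ℝ f p (0, 1) with hB_def
  set C : ℝ × ℝ → ℝ := fun p => fderiv ℝ A p (0, 1) with hC_def
  have hAcd : ContDiff ℝ 1 A := hfd.clm_apply contDiff_const
  have hBcd : ContDiff ℝ 1 Bf := hfd.clm_apply contDiff_const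
  have hAc : Continuous A := hAcd.continuous
  have hBc : Continuous Bf := hBcd.continuous
  have hCc : Continuous C := by
    have h1 : Continuous (fderiv ℝ A) := hAcd.continuous_fderiv one_ne_zero
    exact ((ContinuousLinearMap.apply ℝ ℝ ((0:ℝ), (1:ℝ))).continuous).comp h1
  have huc : Continuous f := hf1.continuous
  -- derivative facts
  have hux : ∀ s t : ℝ, HasDerivAt (fun s' => u s' t) (A (s, t)) s := by
    intro s t
    have hline : HasDerivAt (fun s' : ℝ => ((s', t) : ℝ × ℝ)) ((1 : ℝ), (0 : ℝ)) s :=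
      HasDerivAt.prodMk (hasDerivAt_id s) (hasDerivAt_const s t)
    exact ((hf1.differentiable one_ne_zero (s, t)).hasFDerivAt).comp_hasDerivAt s hline
  have huy : ∀ s t : ℝ, HasDerivAt (fun t' => u s t') (Bf (s, t)) t := by
    intro s t
    have hline : HasDerivAt (fun t' : ℝ => ((s, t') : ℝ × ℝ)) ((0 : ℝ), (1 : ℝ)) t :=
      HasDerivAt.prodMk (hasDerivAt_const t s) (hasDerivAt_id t)
    exact ((hf1.differentiable one_ne_zero (s, t)).hasFDerivAt).comp_hasDerivAt t hline
  have huxy : ∀ s t : ℝ, HasDerivAt (fun t' => A (s, t')) (C (s, t)) t := by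
    intro s t
    have hline : HasDerivAt (fun t' : ℝ => ((s, t') : ℝ × ℝ)) ((0 : ℝ), (1 : ℝ)) t :=
      HasDerivAt.prodMk (hasDerivAt_const t s) (hasDerivAt_id t)
    exact ((hAcd.differentiable one_ne_zero (s, t)).hasFDerivAt).comp_hasDerivAt t hline
  -- continuity of u as curried
  have hucc : Continuous (fun p : ℝ × ℝ => u p.1 p.2) := by
    have : (fun p : ℝ × ℝ => u p.1 p.2) = f := rfl
    rw [this]; exact huc
  -- FTC step 1
  have hx0 : (0:ℝ) ≤ x := le_of_lt hx.1
  have hy0 : (0:ℝ) ≤ y := le_of_lt hy.1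
  have hFTC1 : (u x y) ^ 2 = ∫ s in (0:ℝ)..x, (A (s, y) * u s y + u s y * A (s, y)) := by
    have hder : ∀ s ∈ uIcc (0:ℝ) x,
        HasDerivAt (fun s' => u s' y ^ 2) (A (s, y) * u s y + u s y * A (s, y)) s := by
      intro s _
      have h := (hux s y).mul (hux s y)
      simpa [pow_two, Pi.mul_def] using h
    have hint : IntervalIntegrable (fun s => A (s, y) * u s y + u s y * A (s, y)) volume 0 x := by
      apply Continuous.intervalIntegrable
      have hl : Continuous fun s : ℝ => ((s, y) : ℝ × ℝ) := by fun_prop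
      have h1 : Continuous fun s : ℝ => A (s, y) := hAc.comp hl
      have h2 : Continuous fun s : ℝ => u s y := hucc.comp hl
      fun_prop
    rw [intervalIntegral.integral_eq_sub_of_hasDerivAt hder hint, (hbx y).1]
    ring
  -- FTC step 2
  have hFTC2 : ∀ s : ℝ, u s y * A (s, y) =
      ∫ t in (0:ℝ)..y, (Bf (s, t) * A (s, t) + u s t * C (s, t)) := by
    intro s
    have hder : ∀ t ∈ uIcc (0:ℝ) y,
        HasDerivAt (fun t' => u s t' * A (s, t')) (Bf (s, t) * A (s, t) + u s t * C (s, t)) t :=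
      fun t _ => (huy s t).mul (huxy s t)
    have hint : IntervalIntegrable (fun t => Bf (s, t) * A (s, t) + u s t * C (s, t)) volume 0 y := by
      apply Continuous.intervalIntegrable
      have hl : Continuous fun t : ℝ => ((s, t) : ℝ × ℝ) := by fun_prop
      have h1 : Continuous fun t : ℝ => A (s, t) := hAc.comp hl
      have h2 : Continuous fun t : ℝ => Bf (s, t) := hBc.comp hl
      have h3 : Continuous fun t : ℝ => C (s, t) := hCc.comp hl
      have h4 : Continuous fun t : ℝ => u s t := hucc.comp hl
      fun_prop
    rw [intervalIntegral.integral_eq_sub_of_hasDerivAt hder hint, (hby s).1]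
    ring
  -- combine into a double interval integral
  set H : ℝ × ℝ → ℝ := fun p => 2 * (Bf p * A p + u p.1 p.2 * C p) with hH_def
  set G : ℝ × ℝ → ℝ := fun p => C p ^ 2 + (A p ^ 2 + Bf p ^ 2) + u p.1 p.2 ^ 2 with hG_def
  have hHc : Continuous H := by
    simp only [hH_def]; fun_prop
  have hGc : Continuous G := by
    simp only [hG_def]; fun_prop
  have hdouble : (u x y) ^ 2 = ∫ s in (0:ℝ)..x, ∫ t in (0:ℝ)..y, H (s, t) := by
    rw [hFTC1]
    have h1 : (fun s => A (s, y) * u s y + u s y * A (s, y))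
        = fun s => 2 * (u s y * A (s, y)) := funext fun s => by ring
    rw [h1]
    have h2 : ∀ s : ℝ, 2 * (u s y * A (s, y)) = ∫ t in (0:ℝ)..y, H (s, t) := by
      intro s
      rw [hFTC2 s, ← intervalIntegral.integral_const_mul]
    exact intervalIntegral.integral_congr fun s _ => h2 s
  -- integrability helpers
  have hIntOn : ∀ (h : ℝ × ℝ → ℝ), Continuous h → ∀ (S : Set (ℝ × ℝ)) (a b c d : ℝ),
      S ⊆ Icc a b ×ˢ Icc c d → IntegrableOn h S := by
    intro h hc S a b c d hS
    exact ((hc.continuousOn).integrableOn_compact (isCompact_Icc.prod isCompact_Icc)).mono_set hS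
  have hsub1 : Ioc (0:ℝ) x ×ˢ Ioc (0:ℝ) y ⊆ Icc (0:ℝ) L ×ˢ Icc (0:ℝ) B :=
    prod_mono (Ioc_subset_Icc_self.trans (Icc_subset_Icc le_rfl hx.2.le))
      (Ioc_subset_Icc_self.trans (Icc_subset_Icc le_rfl hy.2.le))
  have hsubD : Ioo (0:ℝ) L ×ˢ Ioo (0:ℝ) B ⊆ Icc (0:ℝ) L ×ˢ Icc (0:ℝ) B :=
    prod_mono Ioo_subset_Icc_self Ioo_subset_Icc_self
  have hHint : IntegrableOn H (Ioc (0:ℝ) x ×ˢ Ioc (0:ℝ) y) := hIntOn H hHc _ 0 L 0 B hsub1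
  have hGint : IntegrableOn G (Ioc (0:ℝ) x ×ˢ Ioc (0:ℝ) y) := hIntOn G hGc _ 0 L 0 B hsub1
  have hGintD : IntegrableOn G (Ioo (0:ℝ) L ×ˢ Ioo (0:ℝ) B) := hIntOn G hGc _ 0 L 0 B hsubD
  -- double integral as set integral over product
  have hprod : ∫ s in (0:ℝ)..x, ∫ t in (0:ℝ)..y, H (s, t)
      = ∫ p in Ioc (0:ℝ) x ×ˢ Ioc (0:ℝ) y, H p := by
    rw [intervalIntegral.integral_of_le hx0]
    have : ∀ s : ℝ, (∫ t in (0:ℝ)..y, H (s, t)) = ∫ t in Ioc (0:ℝ) y, H (s, t) :=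
      fun s => intervalIntegral.integral_of_le hy0
    simp_rw [this]
    rw [show (volume : Measure (ℝ × ℝ)) = Measure.prod volume volume from
      Measure.volume_eq_prod ℝ ℝ] at hHint ⊢
    exact (MeasureTheory.setIntegral_prod H hHint).symm
  -- pointwise bound
  have hHG : ∀ p : ℝ × ℝ, H p ≤ G p := by
    intro p
    simp only [hH_def, hG_def]
    nlinarith [sq_nonneg (A p - Bf p), sq_nonneg (u p.1 p.2 - C p)]
  have hmono1 : ∫ p in Ioc (0:ℝ) x ×ˢ Ioc (0:ℝ) y, H p ≤
      ∫ p in Ioc (0:ℝ) x ×ˢ Ioc (0:ℝ) y, G p :=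
    setIntegral_mono_on hHint hGint
      ((measurableSet_Ioc.prod measurableSet_Ioc)) (fun p _ => hHG p)
  have hGnonneg : ∀ p : ℝ × ℝ, 0 ≤ G p := by
    intro p; simp only [hG_def]; positivity
  have hsub2 : Ioc (0:ℝ) x ×ˢ Ioc (0:ℝ) y ⊆ Ioo (0:ℝ) L ×ˢ Ioo (0:ℝ) B :=
    prod_mono (Ioc_subset_Ioo_right hx.2 |>.trans (by
      intro z hz; exact ⟨hz.1, hz.2⟩) |>.trans (subset_refl _))
      (Ioc_subset_Ioo_right hy.2)
  have hmono2 : ∫ p in Ioc (0:ℝ) x ×ˢ Ioc (0:ℝ) y, G p ≤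
      ∫ p in Ioo (0:ℝ) L ×ˢ Ioo (0:ℝ) B, G p :=
    setIntegral_mono_set hGintD
      (Filter.Eventually.of_forall fun p => hGnonneg p)
      (HasSubset.Subset.eventuallyLE hsub2)
  -- identify the RHS with the integral of G
  have hC_eq : ∀ p : ℝ × ℝ, deriv (fun t => deriv (fun s => u s t) p.1) p.2 = C p := by
    intro p
    have h1 : (fun t => deriv (fun s => u s t) p.1) = fun t => A (p.1, t) :=
      funext fun t => (hux p.1 t).deriv
    rw [h1]
    exact (huxy p.1 p.2).deriv
  have hA_eq : ∀ p : ℝ × ℝ, deriv (fun s => u s p.2) p.1 = A p :=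
    fun p => (hux p.1 p.2).deriv
  have hB_eq : ∀ p : ℝ × ℝ, deriv (u p.1) p.2 = Bf p :=
    fun p => (huy p.1 p.2).deriv
  have hRHS : (∫ p in Ioo 0 L ×ˢ Ioo 0 B,
            (deriv (fun t => deriv (fun s => u s t) p.1) p.2) ^ 2)
          + (∫ p in Ioo 0 L ×ˢ Ioo 0 B,
              ((deriv (fun s => u s p.2) p.1) ^ 2 + (deriv (u p.1) p.2) ^ 2))
          + (∫ p in Ioo 0 L ×ˢ Ioo 0 B, (u p.1 p.2) ^ 2)
      = ∫ p in Ioo (0:ℝ) L ×ˢ Ioo (0:ℝ) B, G p := by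
    simp only [hC_eq, hA_eq, hB_eq]
    have i1 : IntegrableOn (fun p : ℝ × ℝ => C p ^ 2) (Ioo (0:ℝ) L ×ˢ Ioo (0:ℝ) B) :=
      hIntOn _ (by fun_prop) _ 0 L 0 B hsubD
    have i2 : IntegrableOn (fun p : ℝ × ℝ => A p ^ 2 + Bf p ^ 2) (Ioo (0:ℝ) L ×ˢ Ioo (0:ℝ) B) :=
      hIntOn _ (by fun_prop) _ 0 L 0 B hsubD
    have i3 : IntegrableOn (fun p : ℝ × ℝ => u p.1 p.2 ^ 2) (Ioo (0:ℝ) L ×ˢ Ioo (0:ℝ) B) :=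
      hIntOn _ (by fun_prop) _ 0 L 0 B hsubD
    have h12 : (∫ p in Ioo (0:ℝ) L ×ˢ Ioo (0:ℝ) B, (C p ^ 2 + (A p ^ 2 + Bf p ^ 2)))
        = (∫ p in Ioo (0:ℝ) L ×ˢ Ioo (0:ℝ) B, C p ^ 2)
          + ∫ p in Ioo (0:ℝ) L ×ˢ Ioo (0:ℝ) B, (A p ^ 2 + Bf p ^ 2) :=
      MeasureTheory.integral_add i1 i2
    have h123 : (∫ p in Ioo (0:ℝ) L ×ˢ Ioo (0:ℝ) B, G p)
        = (∫ p in Ioo (0:ℝ) L ×ˢ Ioo (0:ℝ) B, (C p ^ 2 + (A p ^ 2 + Bf p ^ 2)))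
          + ∫ p in Ioo (0:ℝ) L ×ˢ Ioo (0:ℝ) B, u p.1 p.2 ^ 2 :=
      MeasureTheory.integral_add (i1.add i2) i3
    rw [h123, h12]
  calc (u x y) ^ 2 = ∫ p in Ioc (0:ℝ) x ×ˢ Ioc (0:ℝ) y, H p := by rw [hdouble, hprod]
    _ ≤ ∫ p in Ioc (0:ℝ) x ×ˢ Ioc (0:ℝ) y, G p := hmono1
    _ ≤ ∫ p in Ioo (0:ℝ) L ×ˢ Ioo (0:ℝ) B, G p := hmono2
    _ = _ := hRHS.symm
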